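/- Write the characteristic polynomial of the transfer matrix as det(z·I_{2m} − T(E)) = z^{2m} + Σ_{j=1}^{2m} a_j(E)·z^{2m−j}. Then for each j = 1,…,2m the coefficient a_j is a polynomial function of E of degree at most min(j, 2m−j)·n; that is, there exists a polynomial p_j ∈ ℂ[X] with deg p_j ≤ min(j, 2m−j)·n such that a_j(E) = p_j(E) for all E ∈ ℂ. -/

import Mathlib

open Matrix

noncomputable def tstep {m : ℕ} (A B C : Matrix (Fin m) (Fin m) ℂ) (E : ℂ) :
    Matrix (Fin m ⊕ Fin m) (Fin m ⊕ Fin m) ℂ :=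
  Matrix.fromBlocks (B⁻¹ * (E • 1 - A)) (-(B⁻¹ * C)) 1 0

/-- The transfer matrix `T(E) = t_n(E) ⋯ t_1(E)` (0-indexed: `t_{n-1} ⋯ t_0`). -/
noncomputable def transfer {n m : ℕ} (A B C : Fin n → Matrix (Fin m) (Fin m) ℂ) (E : ℂ) :
    Matrix (Fin m ⊕ Fin m) (Fin m ⊕ Fin m) ℂ :=
  ((List.ofFn fun k : Fin n => tstep (A k) (B k) (C k) E).reverse).prod

namespace Stmt3Aux
open Polynomial


/-- Budget predicate: coefficient at `Y^k` costs `D*k` of the budget `a`. -/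
def Q (D a : ℕ) (p : Polynomial (Polynomial ℂ)) : Prop :=
  ∀ k, (p.coeff k).natDegree + D * k ≤ a ∨ p.coeff k = 0

lemma Q_one (D : ℕ) : Q D 0 1 := by
  intro k
  rcases k with _ | k
  · left; simp [coeff_one]
  · right; simp [coeff_one]

lemma Q_mul {D a b : ℕ} {p q : Polynomial (Polynomial ℂ)} (hp : Q D a p) (hq : Q D b q) :
    Q D (a + b) (p * q) := by
  intro k
  by_cases h : D * k ≤ a + b
  · left
    rw [coeff_mul]
    have hsum : ((∑ x ∈ Finset.HasAntidiagonal.antidiagonal k, p.coeff x.1 * q.coeff x.2).natDegree)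
        ≤ a + b - D * k := by
      apply natDegree_sum_le_of_forall_le
      rintro ⟨i, j⟩ hij
      simp only [Finset.HasAntidiagonal.mem_antidiagonal] at hij
      dsimp only
      rcases hp i with hi | hi
      · rcases hq j with hj | hj
        · refine (natDegree_mul_le).trans ?_
          have : D * k = D * i + D * j := by rw [← hij, Nat.mul_add]
          omega
        · simp [hj]
      · simp [hi]
    omega
  · right
    rw [coeff_mul]
    apply Finset.sum_eq_zero
    rintro ⟨i, j⟩ hij
    simp only [Finset.HasAntidiagonal.mem_antidiagonal] at hij
    dsimp only
    rcases hp i with hi | hi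
    · rcases hq j with hj | hj
      · exfalso
        have : D * k = D * i + D * j := by rw [← hij, Nat.mul_add]
        omega
      · simp [hj]
    · simp [hi]

lemma Q_prod {ι : Type*} [DecidableEq ι] (D D' : ℕ) (s : Finset ι)
    (f : ι → Polynomial (Polynomial ℂ)) (hf : ∀ i ∈ s, Q D D' (f i)) :
    Q D (s.card * D') (∏ i ∈ s, f i) := by
  induction s using Finset.induction_on with
  | empty => simpa using Q_one D
  | @insert x s' hx ih =>
    rw [Finset.prod_insert hx, Finset.card_insert_of_notMem hx, Nat.add_mul, one_mul,
      Nat.add_comm]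
    exact Q_mul (hf x (Finset.mem_insert_self x s'))
      (ih fun i hi => hf i (Finset.mem_insert_of_mem hi))

lemma Q_smul {D a : ℕ} (ε : ℤˣ) {p : Polynomial (Polynomial ℂ)} (hp : Q D a p) :
    Q D a (ε • p) := by
  rcases Int.units_eq_one_or ε with h | h <;> subst h
  · simpa using hp
  · intro k
    rcases hp k with h | h
    · left; simpa using h
    · right; simp [h]

lemma Q_sum {ι : Type*} {D a : ℕ} (s : Finset ι) (f : ι → Polynomial (Polynomial ℂ))
    (hf : ∀ i ∈ s, Q D a (f i)) : Q D a (∑ i ∈ s, f i) := by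
  classical
  induction s using Finset.induction_on with
  | empty => intro k; right; simp
  | @insert x s' hx ih =>
    rw [Finset.sum_insert hx]
    intro k
    have h1 := hf x (Finset.mem_insert_self x s') k
    have h2 := ih (fun i hi => hf i (Finset.mem_insert_of_mem hi)) k
    rw [coeff_add]
    rcases h1 with h1 | h1 <;> rcases h2 with h2 | h2
    · left
      have := natDegree_add_le ((f x).coeff k) ((∑ i ∈ s', f i).coeff k)
      omega
    · left; simpa [h2] using h1
    · left; simpa [h1] using h2
    · right; simp [h1, h2]

lemma Q_charmatrix {ι : Type*} [DecidableEq ι] [Fintype ι] (D : ℕ)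
    (M : Matrix ι ι (Polynomial ℂ)) (hM : ∀ i j, (M i j).natDegree ≤ D) (i j : ι) :
    Q D D (charmatrix M i j) := by
  by_cases h : i = j
  · subst h
    intro k
    rw [charmatrix_apply, Matrix.diagonal_apply_eq]
    rcases k with _ | _ | k
    · left; simpa [natDegree_neg] using hM i i
    · left; simp
    · right; simp [coeff_X, coeff_C]
  · intro k
    rw [charmatrix_apply, Matrix.diagonal_apply_ne _ h]
    rcases k with _ | k
    · left; simpa [natDegree_neg] using hM i j
    · right; simp

lemma charpoly_coeff_natDegree_le {ι : Type*} [DecidableEq ι] [Fintype ι] (D : ℕ)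
    (M : Matrix ι ι (Polynomial ℂ)) (hM : ∀ i j, (M i j).natDegree ≤ D) (k : ℕ)
    (hk : k ≤ Fintype.card ι) :
    ((M.charpoly).coeff k).natDegree ≤ (Fintype.card ι - k) * D := by
  have hQ : Q D (Fintype.card ι * D) M.charpoly := by
    rw [Matrix.charpoly, Matrix.det_apply]
    apply Q_sum
    intro σ _
    apply Q_smul
    have := Q_prod D D Finset.univ (fun i => charmatrix M (σ i) i)
      (fun i _ => Q_charmatrix D M hM (σ i) i)
    simpa using this
  rcases hQ k with h | h
  · have h2 : D * k ≤ Fintype.card ι * D := by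
      calc D * k = k * D := Nat.mul_comm _ _
      _ ≤ Fintype.card ι * D := Nat.mul_le_mul_right _ hk
    have : (Fintype.card ι - k) * D = Fintype.card ι * D - D * k := by
      rw [Nat.sub_mul, Nat.mul_comm D k]
    omega
  · simp [h]



variable {m : ℕ}

/-- entries of a product of matrices with degree ≤ 1 entries -/
lemma entries_list_prod {ι : Type*} [DecidableEq ι] [Fintype ι]
    (L : List (Matrix ι ι (Polynomial ℂ)))
    (h : ∀ M ∈ L, ∀ i j, (M i j).natDegree ≤ 1) :
    ∀ i j, (L.prod i j).natDegree ≤ L.length := by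
  induction L with
  | nil =>
    intro i j
    simp only [List.prod_nil, List.length_nil]
    rcases eq_or_ne i j with rfl | hij
    · simp [Matrix.one_apply_eq]
    · simp [Matrix.one_apply_ne hij]
  | cons M L ih =>
    intro i j
    rw [List.prod_cons, List.length_cons]
    rw [Matrix.mul_apply]
    apply natDegree_sum_le_of_forall_le
    intro x _
    refine natDegree_mul_le.trans ?_
    have h1 := h M List.mem_cons_self i x
    have h2 := ih (fun N hN => h N (List.mem_cons_of_mem _ hN)) x j
    omega

/-- polynomial version of `tstep`, as `X • U + V` with constant matrices -/
noncomputable def tP (A B C : Matrix (Fin m) (Fin m) ℂ) :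
    Matrix (Fin m ⊕ Fin m) (Fin m ⊕ Fin m) (Polynomial ℂ) :=
  (X : Polynomial ℂ) • (fromBlocks B⁻¹ 0 0 0).map Polynomial.C
    + (fromBlocks (-(B⁻¹ * A)) (-(B⁻¹ * C)) 1 0).map Polynomial.C

/-- polynomial version of the inverse of `tstep` -/
noncomputable def sP (A B C : Matrix (Fin m) (Fin m) ℂ) :
    Matrix (Fin m ⊕ Fin m) (Fin m ⊕ Fin m) (Polynomial ℂ) :=
  (X : Polynomial ℂ) • (fromBlocks 0 0 0 C⁻¹).map Polynomial.C
    + (fromBlocks 0 1 (-(C⁻¹ * B)) (-(C⁻¹ * A))).map Polynomial.C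

lemma tP_entry_deg (A B C : Matrix (Fin m) (Fin m) ℂ) (i j) :
    ((tP A B C) i j).natDegree ≤ 1 := by
  simp only [tP, Matrix.add_apply, Matrix.smul_apply, Matrix.map_apply, smul_eq_mul]
  refine natDegree_add_le_of_degree_le ?_ (by simp)
  refine natDegree_mul_le.trans ?_
  simp

lemma sP_entry_deg (A B C : Matrix (Fin m) (Fin m) ℂ) (i j) :
    ((sP A B C) i j).natDegree ≤ 1 := by
  simp only [sP, Matrix.add_apply, Matrix.smul_apply, Matrix.map_apply, smul_eq_mul]
  refine natDegree_add_le_of_degree_le ?_ (by simp)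
  refine natDegree_mul_le.trans ?_
  simp

lemma tP_mul_sP (A B C : Matrix (Fin m) (Fin m) ℂ) (hB : IsUnit B) (hC : IsUnit C) :
    tP A B C * sP A B C = 1 := by
  have hB' : B⁻¹ * B = 1 := nonsing_inv_mul B ((isUnit_iff_isUnit_det B).mp hB)
  have hB'' : B * B⁻¹ = 1 := mul_nonsing_inv B ((isUnit_iff_isUnit_det B).mp hB)
  have hC' : C⁻¹ * C = 1 := nonsing_inv_mul C ((isUnit_iff_isUnit_det C).mp hC)
  have hC'' : C * C⁻¹ = 1 := mul_nonsing_inv C ((isUnit_iff_isUnit_det C).mp hC)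
  have hUU : (fromBlocks B⁻¹ 0 0 0 : Matrix _ _ ℂ) * fromBlocks 0 0 0 C⁻¹ = 0 := by
    rw [fromBlocks_multiply]
    simp [← fromBlocks_zero]
  have hUV : (fromBlocks B⁻¹ 0 0 0 : Matrix _ _ ℂ) * fromBlocks 0 1 (-(C⁻¹ * B)) (-(C⁻¹ * A))
      + (fromBlocks (-(B⁻¹ * A)) (-(B⁻¹ * C)) 1 0) * fromBlocks 0 0 0 C⁻¹ = 0 := by
    rw [fromBlocks_multiply, fromBlocks_multiply, fromBlocks_add]
    have : -(B⁻¹ * C) * C⁻¹ = -B⁻¹ := by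
      rw [neg_mul, Matrix.mul_assoc, hC'', Matrix.mul_one]
    simp [this, ← fromBlocks_zero]
  have hVV : (fromBlocks (-(B⁻¹ * A)) (-(B⁻¹ * C)) 1 0 : Matrix _ _ ℂ)
      * fromBlocks 0 1 (-(C⁻¹ * B)) (-(C⁻¹ * A)) = 1 := by
    rw [fromBlocks_multiply]
    have h1 : B⁻¹ * C * (C⁻¹ * B) = 1 := by
      rw [Matrix.mul_assoc, ← Matrix.mul_assoc C, hC'', Matrix.one_mul, hB']
    have h2 : B⁻¹ * C * (C⁻¹ * A) = B⁻¹ * A := by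
      rw [Matrix.mul_assoc, ← Matrix.mul_assoc C, hC'', Matrix.one_mul]
    simp [h1, h2, ← fromBlocks_one]
  rw [tP, sP]
  rw [add_mul, mul_add, mul_add]
  simp only [smul_mul_assoc, mul_smul_comm, smul_smul, ← Matrix.map_mul]
  rw [hUU, hVV]
  have hz : ((0 : Matrix (Fin m ⊕ Fin m) (Fin m ⊕ Fin m) ℂ)).map Polynomial.C = 0 :=
    Matrix.map_zero _ (map_zero _)
  have ho : ((1 : Matrix (Fin m ⊕ Fin m) (Fin m ⊕ Fin m) ℂ)).map Polynomial.C = 1 :=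
    Matrix.map_one _ (map_zero _) (map_one _)
  rw [hz, ho, smul_zero]
  have : (X : Polynomial ℂ) • ((fromBlocks B⁻¹ 0 0 0 : Matrix _ _ ℂ)
        * fromBlocks 0 1 (-(C⁻¹ * B)) (-(C⁻¹ * A))).map Polynomial.C
      + (X : Polynomial ℂ) • ((fromBlocks (-(B⁻¹ * A)) (-(B⁻¹ * C)) 1 0 : Matrix _ _ ℂ)
        * fromBlocks 0 0 0 C⁻¹).map Polynomial.C = 0 := by
    rw [← smul_add, ← Matrix.map_add _ (fun a b => map_add Polynomial.C a b), hUV, hz, smul_zero]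
  rw [zero_add, ← add_assoc, this, zero_add]




lemma ofFn_rev_prod_mul {M : Type*} [Monoid M] :
    ∀ (n : ℕ) (f g : Fin n → M), (∀ i, f i * g i = 1) →
      (List.ofFn f).reverse.prod * (List.ofFn g).prod = 1 := by
  intro n
  induction n with
  | zero => intro f g h; simp
  | succ n ih =>
    intro f g h
    rw [List.ofFn_succ, List.ofFn_succ, List.reverse_cons, List.prod_append, List.prod_cons,
      List.prod_cons, List.prod_nil, mul_one]
    rw [mul_assoc, ← mul_assoc (f 0), h 0, one_mul]
    exact ih _ _ (fun i => h i.succ)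

lemma map_tP {m : ℕ} (A B C : Matrix (Fin m) (Fin m) ℂ) (E : ℂ) :
    (tP A B C).map (Polynomial.evalRingHom E) = tstep A B C E := by
  have h1 : tstep A B C E = E • fromBlocks B⁻¹ 0 0 0
      + fromBlocks (-(B⁻¹ * A)) (-(B⁻¹ * C)) 1 0 := by
    rw [tstep]
    have : B⁻¹ * (E • 1 - A) = E • B⁻¹ + -(B⁻¹ * A) := by
      rw [Matrix.mul_sub, Matrix.mul_smul, Matrix.mul_one, sub_eq_add_neg]
    rw [this]
    ext (i | i) (j | j) <;>
      simp [Matrix.fromBlocks, Matrix.add_apply, Matrix.smul_apply]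
  rw [h1]
  ext i j
  simp only [tP, Matrix.map_apply, Matrix.add_apply, Matrix.smul_apply, smul_eq_mul,
    coe_evalRingHom, eval_add, eval_mul, eval_X, eval_C]


end Stmt3Aux

open Stmt3Aux Polynomial

/-- The coefficient `a_j(E)` of `z^(2m-j)` in `det (z·1 - T(E))` is a polynomial
in `E` of degree at most `min j (2m - j) · n`. -/
theorem stmt3 {n m : ℕ} (hn : 2 ≤ n) (hm : 1 ≤ m)
    (A B C : Fin n → Matrix (Fin m) (Fin m) ℂ)
    (hB : ∀ k, IsUnit (B k)) (hC : ∀ k, IsUnit (C k)) :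
    ∀ j : ℕ, 1 ≤ j → j ≤ 2 * m →
      ∃ p : Polynomial ℂ, p.natDegree ≤ min j (2 * m - j) * n ∧
        ∀ E : ℂ, ((transfer A B C E).charpoly).coeff (2 * m - j) = p.eval E := by
  classical
  intro j hj1 hj2
  have hcard : Fintype.card (Fin m ⊕ Fin m) = 2 * m := by simp [two_mul]
  set Tp : Matrix (Fin m ⊕ Fin m) (Fin m ⊕ Fin m) (Polynomial ℂ) :=
    (List.ofFn fun k => tP (A k) (B k) (C k)).reverse.prod with hTp
  set Sp : Matrix (Fin m ⊕ Fin m) (Fin m ⊕ Fin m) (Polynomial ℂ) :=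
    (List.ofFn fun k => sP (A k) (B k) (C k)).prod with hSp
  have hTS : Tp * Sp = 1 :=
    ofFn_rev_prod_mul n _ _ (fun k => tP_mul_sP (A k) (B k) (C k) (hB k) (hC k))
  have hdet1 : Tp.det * Sp.det = 1 := by rw [← det_mul, hTS, det_one]
  have hdetU : IsUnit Tp.det := IsUnit.of_mul_eq_one _ hdet1
  have hTent : ∀ i j', ((Tp) i j').natDegree ≤ n := by
    intro i j'
    have h := entries_list_prod ((List.ofFn fun k => tP (A k) (B k) (C k)).reverse) ?_ i j'
    · simpa using h
    · intro M hM i' j''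
      rw [List.mem_reverse] at hM
      obtain ⟨k, rfl⟩ := List.mem_ofFn.mp hM
      exact tP_entry_deg _ _ _ i' j''
  have hSent : ∀ i j', ((Sp) i j').natDegree ≤ n := by
    intro i j'
    have h := entries_list_prod (List.ofFn fun k => sP (A k) (B k) (C k)) ?_ i j'
    · simpa using h
    · intro M hM i' j''
      obtain ⟨k, rfl⟩ := List.mem_ofFn.mp hM
      exact sP_entry_deg _ _ _ i' j''
  -- the key identity
  have hkey : Tp.charpolyRev = Polynomial.C Tp.det * Sp.charpoly := by
    rw [Matrix.charpolyRev]
    have h2 : Tp.map Polynomial.C *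
        (Sp.map Polynomial.C - (X : Polynomial (Polynomial ℂ)) • 1)
        = 1 - (X : Polynomial (Polynomial ℂ)) • Tp.map Polynomial.C := by
      rw [Matrix.mul_sub, ← Matrix.map_mul, hTS,
        Matrix.map_one _ (map_zero _) (map_one _), mul_smul_comm, Matrix.mul_one]
    rw [← h2, det_mul]
    have hd : (Tp.map Polynomial.C).det = Polynomial.C Tp.det := by
      rw [RingHom.map_det, RingHom.mapMatrix_apply]
    have hneg : Sp.map (Polynomial.C : (Polynomial ℂ) →+* _)
        - (X : Polynomial (Polynomial ℂ)) • 1 = -(charmatrix Sp) := by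
      rw [charmatrix, neg_sub, RingHom.mapMatrix_apply]
      congr 1
      rw [Matrix.smul_one_eq_diagonal]
      rfl
    rw [hneg, det_neg, hcard]
    have hpow : ((-1 : Polynomial (Polynomial ℂ))) ^ (2 * m) = 1 := by
      rw [pow_mul]; norm_num
    rw [hpow, one_mul, hd, Matrix.charpoly]
  have hmono : Tp.charpoly.natDegree = 2 * m := by
    rw [Matrix.charpoly_natDegree_eq_dim, hcard]
  refine ⟨Tp.charpoly.coeff (2 * m - j), ?_, ?_⟩
  · have b1 : (Tp.charpoly.coeff (2 * m - j)).natDegree ≤ j * n := by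
      have h := charpoly_coeff_natDegree_le n Tp hTent (2 * m - j) (by rw [hcard]; omega)
      rw [hcard] at h
      have e : 2 * m - (2 * m - j) = j := by omega
      rwa [e] at h
    have b2 : (Tp.charpoly.coeff (2 * m - j)).natDegree ≤ (2 * m - j) * n := by
      have e1 : Tp.charpoly.coeff (2 * m - j) = Tp.charpoly.reverse.coeff j := by
        rw [Polynomial.coeff_reverse, hmono, Polynomial.revAt_le hj2]
      rw [e1, Matrix.reverse_charpoly, hkey, Polynomial.coeff_C_mul]
      refine Polynomial.natDegree_mul_le.trans ?_
      have hd0 : Tp.det.natDegree = 0 := Polynomial.natDegree_eq_zero_of_isUnit hdetU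
      have h := charpoly_coeff_natDegree_le n Sp hSent j (by rw [hcard]; omega)
      rw [hcard] at h
      omega
    rcases le_total j (2 * m - j) with h | h
    · rw [min_eq_left h]; exact b1
    · rw [min_eq_right h]; exact b2
  · intro E
    have hmapT : Tp.map (Polynomial.evalRingHom E) = transfer A B C E := by
      rw [hTp, ← RingHom.mapMatrix_apply, map_list_prod, List.map_reverse, List.map_ofFn]
      rw [transfer]
      have he : (⇑(Polynomial.evalRingHom E).mapMatrix ∘ fun k => tP (A k) (B k) (C k))
          = fun k : Fin n => tstep (A k) (B k) (C k) E := by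
        funext k
        simp only [Function.comp_apply, RingHom.mapMatrix_apply]
        exact map_tP _ _ _ _
      rw [he]
    rw [← hmapT, Matrix.charpoly_map, Polynomial.coeff_map, Polynomial.coe_evalRingHom]
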